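/- Let m ≥ 2 be an integer, p, q integers with 1 ≤ p ≤ m−1, 1 ≤ q ≤ m+1 and p ≡ q (mod 2), and set p' = m−p, q' = m+2−q. Then for all positive integers u, v with u ≡ v (mod 2) and uv ≤ p'q' − pq, one has h^m_{u,v} ≠ h^m_{p,q} + pq/2. (Hence the Kac determinant det_{(p'q'−pq)/2}(c_m, h^m_{p,q} + pq/2) is nonzero.) -/
import Mathlib


/-- `h^m_{p,q} = (((m+2)p − mq)² − 4) / (8m(m+2))`. -/
noncomputable def hPQ (m : ℝ) (p q : ℤ) : ℝ :=
  (((m + 2) * (p : ℝ) - m * (q : ℝ)) ^ 2 - 4) / (8 * m * (m + 2))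

lemma key_aux (m d e : ℤ) (hm : 2 ≤ m) (hd : 0 < d) (heq : (m + 2) * d = m * e)
    (hpar : d % 2 = e % 2) : m ≤ d ∧ m + 2 ≤ e := by
  have hm0 : 0 < m := by omega
  have he0 : 0 < e := by nlinarith
  have hdvd : m ∣ 2 * d := ⟨e - d, by linarith⟩
  obtain ⟨k, hk⟩ := hdvd
  have hk1 : 1 ≤ k := by nlinarith
  have hdm : m ≤ d := by
    rcases eq_or_lt_of_le hk1 with h1 | h2
    · -- k = 1 : then m = 2d and e = d + 1, parity contradiction
      exfalso
      have hm2d : m = 2 * d := by rw [← h1, mul_one] at hk; omega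
      have hdne : d ≠ 0 := by omega
      have hed : e = d + 1 := by
        have hde : d * e = d * (d + 1) := by nlinarith
        exact mul_left_cancel₀ hdne hde
      omega
    · nlinarith
  refine ⟨hdm, ?_⟩
  nlinarith

/-- For `m ≥ 2`, `1 ≤ p ≤ m−1`, `1 ≤ q ≤ m+1`, `p ≡ q (mod 2)`, `p' = m−p`, `q' = m+2−q`:
no vanishing curve of level `≤ (p'q'−pq)/2` passes through `(c_m, h^m_{p,q} + pq/2)`,
i.e. `h^m_{u,v} ≠ h^m_{p,q} + pq/2` for all positive `u ≡ v (mod 2)` with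
`uv ≤ p'q' − pq`. -/
theorem no_curve_through_shifted_point (m : ℤ) (hm : 2 ≤ m) (p q : ℤ)
    (hp1 : 1 ≤ p) (hp2 : p ≤ m - 1) (hq1 : 1 ≤ q) (hq2 : q ≤ m + 1)
    (hpar : p % 2 = q % 2) :
    ∀ u v : ℤ, 1 ≤ u → 1 ≤ v → u % 2 = v % 2 → u * v ≤ (m - p) * (m + 2 - q) - p * q →
      hPQ (m : ℝ) u v ≠ hPQ (m : ℝ) p q + (p : ℝ) * q / 2 := by
  intro u v hu hv huv hle heq
  have hmR : (0:ℝ) < (m:ℝ) := by exact_mod_cast (by omega : (0:ℤ) < m)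
  have hm2R : (0:ℝ) < (m:ℝ) + 2 := by linarith
  rw [hPQ, hPQ] at heq
  have hden : (8 * (m:ℝ) * ((m:ℝ) + 2)) ≠ 0 := by positivity
  have h1 : (((((m:ℝ) + 2) * u - m * v) ^ 2 - 4) - ((((m:ℝ) + 2) * p - m * q) ^ 2 - 4))
      / (8 * (m:ℝ) * ((m:ℝ) + 2)) = (p:ℝ) * q / 2 := by
    rw [sub_div, heq]; ring
  have h2 := (div_eq_iff hden).mp h1
  have hR : (((m:ℝ) + 2) * u - m * v) ^ 2 = (((m:ℝ) + 2) * p + m * q) ^ 2 := by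
    linear_combination h2
  have hZ : ((m + 2) * u - m * v) ^ 2 = ((m + 2) * p + m * q) ^ 2 := by
    exact_mod_cast hR
  have h0 : (((m + 2) * u - m * v) - ((m + 2) * p + m * q)) *
      (((m + 2) * u - m * v) + ((m + 2) * p + m * q)) = 0 := by linear_combination hZ
  rcases mul_eq_zero.mp h0 with h | h
  · -- (m+2)(u-p) = m(v+q)
    have heq2 : (m + 2) * (u - p) = m * (v + q) := by linarith
    have hdpos : 0 < u - p := by nlinarith
    have hpar2 : (u - p) % 2 = (v + q) % 2 := by omega
    obtain ⟨h1, h2⟩ := key_aux m (u - p) (v + q) hm hdpos heq2 hpar2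
    -- u ≥ p + m, v ≥ m + 2 - q
    have hprod : (p + m) * (m + 2 - q) ≤ u * v := by nlinarith
    nlinarith
  · -- (m+2)(u+p) = m(v-q)
    have heq2 : (m + 2) * (u + p) = m * (v - q) := by linarith
    have hdpos : 0 < u + p := by omega
    have hpar2 : (u + p) % 2 = (v - q) % 2 := by omega
    obtain ⟨h1, h2⟩ := key_aux m (u + p) (v - q) hm hdpos heq2 hpar2
    have hprod : (m - p) * (m + 2 + q) ≤ u * v := by nlinarith
    nlinarith
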